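/- Let a and b be coprime positive integers, and let m_0, m_1, …, m_a be nonnegative integers such that Σ_{i=0}^{a} i·m_i = a and Σ_{i=0}^{a} m_i = b. Then the number of (a,b)-Dyck paths having exactly m_i vertical runs of length i for every i ∈ {0,1,…,a} equals (b−1)!/(m_0!·m_1!·…·m_a!). -/

import Mathlib

/-- A word over `{N, E}`, encoded as a `List Bool` with `true` = N (north step) and
`false` = E (east step), is an `(a,b)`-Dyck path if it has exactly `a` norths and
`b` easts and every prefix with `i` norths and `j` easts satisfies `b*i ≥ a*j`. -/
def IsDyckWord (a b : ℕ) (w : List Bool) : Prop :=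
  w.count true = a ∧ w.count false = b ∧
    ∀ p : List Bool, p <+: w → a * p.count false ≤ b * p.count true

/-- `runLengthsAux k w` collects the lengths of the vertical runs of `w`,
where `k` is the number of norths seen since the last east (or the start). -/
def runLengthsAux : ℕ → List Bool → List ℕ
  | _, [] => []
  | k, true :: rest => runLengthsAux (k + 1) rest
  | k, false :: rest => k :: runLengthsAux 0 rest

/-- The list of lengths of the vertical runs of a word: each east step terminates a
vertical run whose length is the number of norths since the preceding east
(or since the beginning of the word). -/
def runLengths (w : List Bool) : List ℕ := runLengthsAux 0 w

namespace Stmt0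

def decode (L : List ℕ) : List Bool := L.flatMap fun k => List.replicate k true ++ [false]

@[simp] lemma decode_nil : decode [] = [] := rfl

@[simp] lemma decode_cons (x : ℕ) (L : List ℕ) :
    decode (x :: L) = List.replicate x true ++ false :: decode L := by
  simp [decode, List.flatMap]

lemma decode_append (L M : List ℕ) : decode (L ++ M) = decode L ++ decode M := by
  simp [decode]

@[simp] lemma count_true_decode (L : List ℕ) : (decode L).count true = L.sum := by
  induction L with
  | nil => rfl
  | cons x L ih => simp [ih, List.count_append, List.count_replicate]

@[simp] lemma count_false_decode (L : List ℕ) : (decode L).count false = L.length := by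
  induction L with
  | nil => rfl
  | cons x L ih => simp [ih, List.count_append, List.count_replicate]

lemma runLengthsAux_replicate (k n : ℕ) (w : List Bool) :
    runLengthsAux k (List.replicate n true ++ w) = runLengthsAux (k + n) w := by
  induction n generalizing k with
  | zero => simp [List.replicate]
  | succ n ih =>
      rw [List.replicate_succ, List.cons_append]
      show runLengthsAux (k+1) _ = _
      rw [ih]
      ring_nf

lemma runLengths_decode (L : List ℕ) : runLengths (decode L) = L := by
  induction L with
  | nil => rfl
  | cons x L ih =>
      show runLengthsAux 0 _ = _
      rw [decode_cons, runLengthsAux_replicate, Nat.zero_add]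
      show x :: runLengths (decode L) = _
      rw [ih]

lemma length_runLengthsAux (k : ℕ) (w : List Bool) :
    (runLengthsAux k w).length = w.count false := by
  induction w generalizing k with
  | nil => rfl
  | cons c rest ih =>
      cases c <;> simp [runLengthsAux, ih]

lemma exists_decode (w : List Bool) (k : ℕ) :
    ∃ t, decode (runLengthsAux k w) ++ List.replicate t true = List.replicate k true ++ w ∧
      (runLengthsAux k w).sum + t = k + w.count true := by
  induction w generalizing k with
  | nil => exact ⟨k, by simp [runLengthsAux]⟩
  | cons c rest ih =>
      cases c with
      | false =>
          obtain ⟨t, h1, h2⟩ := ih 0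
          refine ⟨t, ?_, ?_⟩
          · show decode (k :: runLengthsAux 0 rest) ++ _ = _
            rw [decode_cons, List.append_assoc, List.cons_append, h1]
            simp
          · show (k :: runLengthsAux 0 rest).sum + t = _
            simp only [List.sum_cons]
            simp at h2 ⊢
            omega
      | true =>
          obtain ⟨t, h1, h2⟩ := ih (k+1)
          refine ⟨t, ?_, ?_⟩
          · show decode (runLengthsAux (k+1) rest) ++ _ = _
            rw [h1, List.replicate_succ']
            simp
          · show (runLengthsAux (k+1) rest).sum + t = _
            simp at h2 ⊢
            omega


lemma decode_ends_false (L : List ℕ) (h : L ≠ []) : ∃ u, decode L = u ++ [false] := by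
  induction L with
  | nil => exact absurd rfl h
  | cons x L ih =>
      cases L with
      | nil => exact ⟨List.replicate x true, by simp⟩
      | cons y M =>
          obtain ⟨u, hu⟩ := ih (by simp)
          exact ⟨List.replicate x true ++ false :: u, by simp [hu]⟩

/-- A predicate on run-length lists equivalent to the Dyck condition. -/
def DyckL (a b : ℕ) (L : List ℕ) : Prop := ∀ j ≤ b, a * j ≤ b * (L.take j).sum

lemma isDyck_decode {a b : ℕ} (L : List ℕ) :
    IsDyckWord a b (decode L) ↔ L.sum = a ∧ L.length = b ∧ DyckL a b L := by
  constructor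
  · rintro ⟨h1, h2, h3⟩
    simp only [count_true_decode, count_false_decode] at h1 h2
    refine ⟨h1, h2, fun j hj => ?_⟩
    have hpre : decode (L.take j) <+: decode L :=
      ⟨decode (L.drop j), by rw [← decode_append, List.take_append_drop]⟩
    have := h3 _ hpre
    simpa [List.length_take, Nat.min_eq_left (h2 ▸ hj)] using this
  · rintro ⟨h1, h2, h3⟩
    refine ⟨by simpa using h1, by simpa using h2, fun p hp => ?_⟩
    set j := p.count false with hj
    have hjb : j ≤ L.length := by
      have := hp.count_le false
      simpa [hj] using this
    -- decode (L.take j) is a prefix of p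
    have hd : decode (L.take j) <+: decode L :=
      ⟨decode (L.drop j), by rw [← decode_append, List.take_append_drop]⟩
    have hdp : decode (L.take j) <+: p := by
      rcases List.prefix_or_prefix_of_prefix hd hp with h | h
      · exact h
      · -- p <+: decode (L.take j); show they are equal
        obtain ⟨r, hr⟩ := h
        have hcount : (decode (L.take j)).count false = j := by
          simp [List.length_take, Nat.min_eq_left hjb]
        have hrf : r.count false = 0 := by
          have := congrArg (List.count false) hr
          simp only [List.count_append] at this
          omega
        rcases eq_or_ne j 0 with h0 | h0
        · simp [h0]
        · rcases eq_or_ne r [] with hre | hre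
          · rw [← hr, hre, List.append_nil]
          · exfalso
            obtain ⟨u, hu⟩ := decode_ends_false (L.take j)
              (by intro hh; rw [hh] at hcount; simp at hcount; omega)
            rcases List.eq_nil_or_concat r with hre' | ⟨r', c, rc⟩
            · exact hre hre'
            · rw [List.concat_eq_append] at rc
              rw [rc, hu, ← List.append_assoc] at hr
              have hc : c = false := by
                have := congrArg List.getLast? hr
                simpa [List.getLast?_concat] using this
              have : false ∈ r := by rw [rc, hc]; simp
              rw [List.count_eq_zero] at hrf
              exact hrf this
    calc a * j ≤ b * (L.take j).sum := h3 j (h2 ▸ hjb)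
      _ ≤ b * p.count true := by
          have := hdp.count_le true
          simp only [count_true_decode] at this
          exact Nat.mul_le_mul_left _ this


/-- `g a b L j = b * S_j - a * j` where `S_j` is the sum of the first `j` entries. -/
def g (a b : ℕ) (L : List ℕ) (j : ℕ) : ℤ := (b : ℤ) * ((L.take j).sum : ℤ) - (a : ℤ) * j

lemma rot_take_sum (L : List ℕ) {d j : ℕ} (hd : d ≤ L.length) (hj : j ≤ L.length) :
    (L.take d).sum + ((L.rotate d).take j).sum
      = (L.take (min (d + j) L.length)).sum + (L.take (j - (L.length - d))).sum := by
  rw [List.rotate_eq_drop_append_take hd, List.take_append, List.sum_append,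
    List.length_drop, List.take_take]
  rcases le_or_gt (d + j) L.length with h | h
  · have h1 : j - (L.length - d) = 0 := by omega
    have h2 : min (d + j) L.length = d + j := by omega
    rw [h1, h2]
    have hs := congrArg List.sum (List.take_add (l := L) (i := d) (j := j))
    rw [List.sum_append] at hs
    simp only [List.take_zero, List.sum_nil, add_zero, Nat.min_zero, Nat.zero_min]
    omega
  · have h2 : min (d + j) L.length = L.length := by omega
    have h3 : min (j - (L.length - d)) d = j - (L.length - d) := by omega
    have h4 : List.take j (L.drop d) = L.drop d := by
      apply List.take_of_length_le; rw [List.length_drop]; omega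
    rw [h2, h3, h4, List.take_length]
    have : (L.take d).sum + (L.drop d).sum = L.sum := by
      rw [← List.sum_append, List.take_append_drop]
    omega

lemma g_rot {a b : ℕ} (L : List ℕ) (hlen : L.length = b) (hsum : L.sum = a)
    {d j : ℕ} (hd : d ≤ b) (hj : j ≤ b) :
    (b : ℤ) * (((L.rotate d).take j).sum : ℤ) - (a : ℤ) * j
      = g a b L (if d + j ≤ b then d + j else d + j - b) - g a b L d := by
  have key := rot_take_sum L (hlen ▸ hd) (hlen ▸ hj)
  have keyz : ((L.take d).sum : ℤ) + (((L.rotate d).take j).sum : ℤ)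
      = ((L.take (min (d + j) L.length)).sum : ℤ) + ((L.take (j - (L.length - d))).sum : ℤ) := by
    exact_mod_cast congrArg (Nat.cast : ℕ → ℤ) key
  rw [hlen] at keyz
  split_ifs with h
  · have h1 : j - (b - d) = 0 := by omega
    have h2 : min (d + j) b = d + j := by omega
    rw [h1, h2] at keyz
    simp only [List.take_zero, List.sum_nil, Nat.cast_zero, add_zero] at keyz
    simp only [g, Nat.cast_add]
    linear_combination (b:ℤ) * keyz
  · have h2 : min (d + j) b = b := by omega
    have hcast : ((d + j - b : ℕ) : ℤ) = (d : ℤ) + j - b := by omega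
    rw [h2] at keyz
    have hb : L.take b = L := by rw [← hlen]; exact List.take_length
    rw [hb, hsum] at keyz
    have h3 : (j - (b - d)) = d + j - b := by omega
    rw [h3] at keyz
    simp only [g]
    rw [hcast]
    linear_combination (b:ℤ) * keyz

lemma g_zero (a b : ℕ) (L : List ℕ) : g a b L 0 = 0 := by simp [g]

lemma g_len {a b : ℕ} (L : List ℕ) (hlen : L.length = b) (hsum : L.sum = a) :
    g a b L b = 0 := by
  have ht : L.take b = L := by rw [← hlen]; exact List.take_length
  rw [g, ht, hsum]
  ring

lemma dyck_rotate_iff {a b : ℕ} (hb : 0 < b) (L : List ℕ) (hlen : L.length = b)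
    (hsum : L.sum = a) {d : ℕ} (hd : d < b) :
    DyckL a b (L.rotate d) ↔ ∀ k < b, g a b L d ≤ g a b L k := by
  have hrotlen : ∀ j, j ≤ b → True := fun _ _ => trivial
  constructor
  · intro h k hk
    rcases le_or_gt d k with hdk | hdk
    · have hj : k - d ≤ b := by omega
      have := h (k - d) hj
      have hg := g_rot L hlen hsum (le_of_lt hd) hj
      rw [if_pos (by omega : d + (k - d) ≤ b)] at hg
      have hix : d + (k - d) = k := by omega
      rw [hix] at hg
      have : (a : ℤ) * (k - d : ℕ) ≤ (b : ℤ) * (((L.rotate d).take (k - d)).sum : ℤ) := by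
        exact_mod_cast this
      linarith [hg, this]
    · rcases Nat.eq_zero_or_pos k with rfl | hk0
      · -- use j = b - d, index = b, g b = 0 = g 0
        have hj : b - d ≤ b := by omega
        have := h (b - d) hj
        have hg := g_rot L hlen hsum (le_of_lt hd) hj
        rw [if_pos (by omega : d + (b - d) ≤ b)] at hg
        have hix : d + (b - d) = b := by omega
        rw [hix, g_len L hlen hsum] at hg
        have hcast : (a : ℤ) * (b - d : ℕ) ≤ (b : ℤ) * (((L.rotate d).take (b - d)).sum : ℤ) := by
          exact_mod_cast this
        rw [g_zero]
        linarith [hg, hcast]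
      · have hj : k + b - d ≤ b := by omega
        have := h (k + b - d) hj
        have hg := g_rot L hlen hsum (le_of_lt hd) hj
        rw [if_neg (by omega : ¬ d + (k + b - d) ≤ b)] at hg
        have hix : d + (k + b - d) - b = k := by omega
        rw [hix] at hg
        have hcast : (a : ℤ) * (k + b - d : ℕ) ≤ (b : ℤ) * (((L.rotate d).take (k + b - d)).sum : ℤ) := by
          exact_mod_cast this
        linarith [hg, hcast]
  · intro h j hj
    have hg := g_rot L hlen hsum (le_of_lt hd) hj
    have hix : g a b L d ≤ g a b L (if d + j ≤ b then d + j else d + j - b) := by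
      split_ifs with hc
      · rcases eq_or_lt_of_le hc with he | hlt
        · rw [he, g_len L hlen hsum, ← g_zero a b L]
          exact h 0 hb
        · exact h _ hlt
      · exact h _ (by omega)
    have : (0:ℤ) ≤ (b : ℤ) * (((L.rotate d).take j).sum : ℤ) - (a : ℤ) * j := by
      rw [hg]; linarith
    have : (a : ℤ) * j ≤ (b : ℤ) * (((L.rotate d).take j).sum : ℤ) := by linarith
    exact_mod_cast this

lemma g_inj {a b : ℕ} (hab : Nat.Coprime a b) (L : List ℕ) :
    ∀ i < b, ∀ j < b, g a b L i = g a b L j → i = j := by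
  intro i hi j hj hij
  have : (b : ℤ) ∣ (a : ℤ) * ((i : ℤ) - (j : ℤ)) := by
    have : (a : ℤ) * i - (a:ℤ) * j = (b:ℤ) * ((L.take i).sum : ℤ) - (b:ℤ) * ((L.take j).sum : ℤ) := by
      simp only [g] at hij; linarith
    refine ⟨((L.take i).sum : ℤ) - ((L.take j).sum : ℤ), ?_⟩
    linarith [this]
  have hco : IsCoprime (b : ℤ) (a : ℤ) := by
    rw [Int.isCoprime_iff_gcd_eq_one]
    simpa [Nat.Coprime, Nat.gcd_comm] using hab
  have hdvd : (b : ℤ) ∣ ((i : ℤ) - (j : ℤ)) := hco.dvd_of_dvd_mul_left this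
  rcases eq_or_ne i j with h | h
  · exact h
  · exfalso
    have hne : (i : ℤ) - (j : ℤ) ≠ 0 := by
      intro hc; apply h; omega
    have habs : (b : ℤ) ≤ |(i : ℤ) - (j : ℤ)| :=
      Int.le_of_dvd (abs_pos.mpr hne) ((dvd_abs _ _).mpr hdvd)
    have hlt : |(i : ℤ) - (j : ℤ)| < b := by
      rw [abs_sub_lt_iff]
      constructor <;> omega
    linarith

lemma cycle_lemma {a b : ℕ} (hb : 0 < b) (hab : Nat.Coprime a b) (L : List ℕ)
    (hlen : L.length = b) (hsum : L.sum = a) :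
    ∃! d, d < b ∧ DyckL a b (L.rotate d) := by
  obtain ⟨d0, hd0, hmin⟩ := Finset.exists_min_image (Finset.range b) (g a b L)
    ⟨0, Finset.mem_range.mpr hb⟩
  rw [Finset.mem_range] at hd0
  refine ⟨d0, ⟨hd0, (dyck_rotate_iff hb L hlen hsum hd0).mpr
    (fun k hk => hmin k (Finset.mem_range.mpr hk))⟩, ?_⟩
  rintro d ⟨hd, hdy⟩
  have h1 := (dyck_rotate_iff hb L hlen hsum hd).mp hdy
  have : g a b L d = g a b L d0 :=
    le_antisymm (h1 d0 hd0) (hmin d (Finset.mem_range.mpr hd))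
  exact g_inj hab L d hd d0 hd0 this

variable {α : Type*} [DecidableEq α]

/-- The finset of lists whose underlying multiset is `s`. -/
noncomputable def perms (s : Multiset α) : Finset (List α) := s.toList.permutations.toFinset

lemma mem_perms {s : Multiset α} {L : List α} : L ∈ perms s ↔ (L : Multiset α) = s := by
  rw [perms, List.mem_toFinset, List.mem_permutations]
  constructor
  · intro h
    rw [← Multiset.coe_toList s]
    exact Multiset.coe_eq_coe.mpr h
  · intro h
    have : (L : Multiset α) = (s.toList : Multiset α) := by rw [h, Multiset.coe_toList]
    exact Multiset.coe_eq_coe.mp this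

lemma perms_card (s : Multiset α) (F : Finset α) (hF : s.toFinset ⊆ F) :
    (perms s).card * ∏ i ∈ F, (s.count i).factorial = (Multiset.card s).factorial := by
  induction s using Multiset.strongInductionOn generalizing F with
  | _ s ih =>
    rcases eq_or_ne s 0 with rfl | hs
    · simp [perms]
    · -- s nonempty
      have hcard : 0 < Multiset.card s := Multiset.card_pos.mpr hs
      have hsplit : perms s =
          s.toFinset.biUnion (fun x => (perms (s.erase x)).image (x :: ·)) := by
        ext L
        simp only [Finset.mem_biUnion, Finset.mem_image, mem_perms, Multiset.mem_toFinset]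
        constructor
        · intro hL
          cases L with
          | nil => exact absurd hL.symm (by simpa using hs)
          | cons x M =>
              refine ⟨x, ?_, M, ?_, rfl⟩
              · rw [← hL]; simp
              · have : (x ::ₘ (M : Multiset α)) = s := by rw [← hL]; rfl
                rw [← this, Multiset.erase_cons_head]
        · rintro ⟨x, hx, M, hM, rfl⟩
          show (x ::ₘ (M : Multiset α)) = s
          rw [hM, Multiset.cons_erase hx]
      have hdisj : ∀ x ∈ s.toFinset, ∀ y ∈ s.toFinset, x ≠ y →
          Disjoint ((perms (s.erase x)).image (x :: ·)) ((perms (s.erase y)).image (y :: ·)) := by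
        intro x _ y _ hxy
        rw [Finset.disjoint_left]
        rintro L hLx hLy
        simp only [Finset.mem_image] at hLx hLy
        obtain ⟨M, _, rfl⟩ := hLx
        obtain ⟨M', _, hM'⟩ := hLy
        exact hxy (by injection hM'.symm)
      rw [hsplit, Finset.card_biUnion hdisj]
      have hterm : ∀ x ∈ s.toFinset,
          ((perms (s.erase x)).image (x :: ·)).card * ∏ i ∈ F, (s.count i).factorial
            = s.count x * (Multiset.card s - 1).factorial := by
        intro x hx
        rw [Finset.card_image_of_injective _ (fun _ _ => by simp)]
        have hxF : x ∈ F := hF hx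
        have hxs : x ∈ s := Multiset.mem_toFinset.mp hx
        have hprod : ∏ i ∈ F, (s.count i).factorial
            = s.count x * ∏ i ∈ F, ((s.erase x).count i).factorial := by
          rw [← Finset.mul_prod_erase F _ hxF, ← Finset.mul_prod_erase F _ hxF]
          have h1 : (s.count x).factorial = s.count x * ((s.erase x).count x).factorial := by
            rw [Multiset.count_erase_self]
            have : 0 < s.count x := Multiset.count_pos.mpr hxs
            rw [← Nat.succ_pred_eq_of_pos this, Nat.factorial_succ]
            simp
          rw [h1, mul_assoc]
          congr 1
          congr 1
          exact Finset.prod_congr rfl fun i hi => by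
            rw [Multiset.count_erase_of_ne (Finset.ne_of_mem_erase hi)]
        rw [hprod, ← mul_assoc, mul_comm ((perms (s.erase x)).card) (s.count x), mul_assoc]
        rw [ih (s.erase x) (Multiset.erase_lt.mpr hxs) F
          (subset_trans (Multiset.toFinset_subset.mpr (Multiset.subset_of_le (Multiset.erase_le x s))) hF)]
        rw [Multiset.card_erase_of_mem hxs]
        rfl
      rw [Finset.sum_mul, Finset.sum_congr rfl hterm, ← Finset.sum_mul,
        Multiset.toFinset_sum_count_eq]
      rw [← Nat.succ_pred_eq_of_pos hcard, Nat.factorial_succ]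
      simp [Nat.succ_pred_eq_of_pos hcard]

end Stmt0

open Stmt0 in
/-- for coprime positive `a, b` and nonnegative integers
`m 0, …, m a` with `∑ i * m i = a` and `∑ m i = b`, the number of `(a,b)`-Dyck
paths having exactly `m i` vertical runs of length `i` for every `i ≤ a`
equals `(b-1)! / (m 0! ⋯ m a !)`. -/
theorem stmt0 (a b : ℕ) (ha : 0 < a) (hb : 0 < b) (hab : Nat.Coprime a b)
    (m : ℕ → ℕ)
    (h1 : ∑ i ∈ Finset.range (a + 1), i * m i = a)
    (h2 : ∑ i ∈ Finset.range (a + 1), m i = b) :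
    {w : List Bool | IsDyckWord a b w ∧
        ∀ i ≤ a, (runLengths w).count i = m i}.ncard *
      ∏ i ∈ Finset.range (a + 1), (m i).factorial = (b - 1).factorial := by
  classical
  set s : Multiset ℕ := ∑ i ∈ Finset.range (a + 1), Multiset.replicate (m i) i with hs
  have hscount : ∀ i, i ≤ a → s.count i = m i := by
    intro i hi
    rw [hs, Multiset.count_sum']
    simp [Multiset.count_replicate, Nat.lt_succ_iff.mpr hi]
  have hscount0 : ∀ i, a < i → s.count i = 0 := by
    intro i hi
    rw [hs, Multiset.count_sum']
    apply Finset.sum_eq_zero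
    intro j hj
    rw [Multiset.count_replicate, if_neg]
    intro hji
    rw [Finset.mem_range] at hj
    omega
  have hMsum : ∀ (F : Finset ℕ) (f : ℕ → Multiset ℕ), (∑ i ∈ F, f i).sum = ∑ i ∈ F, (f i).sum := by
    intro F f
    induction F using Finset.cons_induction with
    | empty => simp
    | cons x F hx ih => rw [Finset.sum_cons, Finset.sum_cons, Multiset.sum_add, ih]
  have hMcard : ∀ (F : Finset ℕ) (f : ℕ → Multiset ℕ),
      Multiset.card (∑ i ∈ F, f i) = ∑ i ∈ F, Multiset.card (f i) := by
    intro F f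
    induction F using Finset.cons_induction with
    | empty => simp
    | cons x F hx ih => rw [Finset.sum_cons, Finset.sum_cons, Multiset.card_add, ih]
  have hscard : Multiset.card s = b := by
    rw [hs, hMcard]
    simpa using h2
  have hssum : s.sum = a := by
    rw [hs, hMsum]
    simp only [Multiset.sum_replicate, smul_eq_mul]
    simpa [mul_comm] using h1
  have hsub : s.toFinset ⊆ Finset.range (a + 1) := by
    intro i hi
    rw [Finset.mem_range, Nat.lt_succ_iff]
    by_contra hni
    have := hscount0 i (by omega)
    rw [Multiset.count_eq_zero] at this
    exact this (Multiset.mem_toFinset.mp hi)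
  -- lists with coe s
  have coe_facts : ∀ L : List ℕ, (↑L : Multiset ℕ) = s → L.length = b ∧ L.sum = a := by
    intro L hL
    constructor
    · have := congrArg Multiset.card hL
      rwa [Multiset.coe_card, hscard] at this
    · have := congrArg Multiset.sum hL
      rwa [Multiset.sum_coe, hssum] at this
  have coe_of : ∀ L : List ℕ, L.length = b → (∀ i ≤ a, L.count i = m i) →
      (↑L : Multiset ℕ) = s := by
    intro L hlen hcnt
    have htc : ∀ i, Multiset.count i (↑L : Multiset ℕ) = L.count i :=
      fun i => Multiset.coe_count i L
    have hsum1 : ∑ i ∈ (↑L : Multiset ℕ).toFinset, Multiset.count i (↑L : Multiset ℕ) = b := by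
      rw [Multiset.toFinset_sum_count_eq, Multiset.coe_card, hlen]
    have hsum2 : ∑ i ∈ Finset.range (a + 1), Multiset.count i (↑L : Multiset ℕ) = b := by
      calc ∑ i ∈ Finset.range (a + 1), Multiset.count i (↑L : Multiset ℕ)
          = ∑ i ∈ Finset.range (a + 1), m i := by
            refine Finset.sum_congr rfl fun i hi => ?_
            rw [htc, hcnt i (Nat.lt_succ_iff.mp (Finset.mem_range.mp hi))]
        _ = b := h2
    have hfilter : ∑ i ∈ (↑L : Multiset ℕ).toFinset.filter (fun j => j ∈ Finset.range (a + 1)),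
        Multiset.count i (↑L : Multiset ℕ)
        = ∑ i ∈ Finset.range (a + 1), Multiset.count i (↑L : Multiset ℕ) := by
      apply Finset.sum_subset
      · intro i hi; exact (Finset.mem_filter.mp hi).2
      · intro i hi hni
        rw [Multiset.count_eq_zero]
        intro hmem
        exact hni (Finset.mem_filter.mpr ⟨Multiset.mem_toFinset.mpr hmem, hi⟩)
    have hsubL : (↑L : Multiset ℕ).toFinset ⊆ Finset.range (a + 1) := by
      intro i hi
      by_contra hni
      have hle : Multiset.count i (↑L : Multiset ℕ)
          ≤ ∑ j ∈ (↑L : Multiset ℕ).toFinset.filter (fun j => ¬ j ∈ Finset.range (a + 1)),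
              Multiset.count j (↑L : Multiset ℕ) :=
        Finset.single_le_sum (f := fun j => Multiset.count j (↑L : Multiset ℕ))
          (fun j _ => Nat.zero_le _) (Finset.mem_filter.mpr ⟨hi, hni⟩)
      have hpos : 0 < Multiset.count i (↑L : Multiset ℕ) :=
        Multiset.count_pos.mpr (Multiset.mem_toFinset.mp hi)
      have hkey := Finset.sum_filter_add_sum_filter_not (↑L : Multiset ℕ).toFinset
        (fun j => j ∈ Finset.range (a + 1)) (fun j => Multiset.count j (↑L : Multiset ℕ))
      omega
    rw [Multiset.ext]
    intro i
    rcases le_or_gt i a with hia | hia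
    · rw [htc, hcnt i hia, hscount i hia]
    · rw [hscount0 i hia, Multiset.count_eq_zero]
      intro hmem
      have := hsubL (Multiset.mem_toFinset.mpr hmem)
      rw [Finset.mem_range] at this
      omega
  -- the Dyck subset
  set D : Finset (List ℕ) := (perms s).filter (fun L => DyckL a b L) with hD
  have hDmem : ∀ L : List ℕ, L ∈ D ↔ ((↑L : Multiset ℕ) = s ∧ DyckL a b L) := by
    intro L
    rw [hD, Finset.mem_filter, mem_perms]
  -- rotation counting
  have hmod : ∀ x, x < b → (b - x) % b = if x = 0 then 0 else b - x := by
    intro x hx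
    rcases Nat.eq_zero_or_pos x with rfl | hxp
    · simp [Nat.sub_zero, Nat.mod_self]
    · rw [if_neg (by omega)]
      exact Nat.mod_eq_of_lt (by omega)
  have hback : ∀ M : List ℕ, M.length = b → ∀ d, d < b →
      (M.rotate d).rotate ((b - d) % b) = M := by
    intro M hlenM d hd
    rw [List.rotate_rotate]
    rcases Nat.eq_zero_or_pos d with rfl | hdp
    · rw [Nat.sub_zero, Nat.mod_self, Nat.add_zero, List.rotate_zero]
    · rw [Nat.mod_eq_of_lt (by omega), (by omega : d + (b - d) = b), ← hlenM,
        List.rotate_length]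
  have hcard2 : (perms s).card = D.card * b := by
    have himg : (D ×ˢ Finset.range b).image (fun p : List ℕ × ℕ => p.1.rotate p.2)
        = perms s := by
      apply Finset.Subset.antisymm
      · intro L hL
        simp only [Finset.mem_image, Finset.mem_product, Finset.mem_range] at hL
        obtain ⟨⟨M, d⟩, ⟨hM, hd⟩, rfl⟩ := hL
        rw [mem_perms]
        rw [hDmem] at hM
        rw [← hM.1]
        exact Multiset.coe_eq_coe.mpr (List.rotate_perm M d)
      · intro L hL
        have hLs := mem_perms.mp hL
        obtain ⟨hlenL, hsumL⟩ := coe_facts L hLs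
        obtain ⟨d, ⟨hd, hdy⟩, _⟩ := cycle_lemma hb hab L hlenL hsumL
        simp only [Finset.mem_image, Finset.mem_product, Finset.mem_range]
        refine ⟨⟨L.rotate d, (b - d) % b⟩, ⟨?_, Nat.mod_lt _ hb⟩, hback L hlenL d hd⟩
        rw [hDmem]
        constructor
        · rw [← hLs]; exact Multiset.coe_eq_coe.mpr (List.rotate_perm L d)
        · exact hdy
    have hinj : Set.InjOn (fun p : List ℕ × ℕ => p.1.rotate p.2) ↑(D ×ˢ Finset.range b) := by
      rintro ⟨L, d⟩ hLd ⟨L', d'⟩ hLd' heq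
      simp only [Finset.coe_product, Set.mem_prod, Finset.mem_coe, Finset.mem_range] at hLd hLd'
      obtain ⟨hLD, hd⟩ := hLd
      obtain ⟨hLD', hd'⟩ := hLd'
      rw [hDmem] at hLD hLD'
      obtain ⟨hLs, hLdy⟩ := hLD
      obtain ⟨hLs', hLdy'⟩ := hLD'
      obtain ⟨hlenL, hsumL⟩ := coe_facts L hLs
      obtain ⟨hlenL', hsumL'⟩ := coe_facts L' hLs'
      simp only at heq
      set K := L.rotate d with hK
      have hKs : (↑K : Multiset ℕ) = s := by
        rw [hK, ← hLs]; exact Multiset.coe_eq_coe.mpr (List.rotate_perm L d)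
      obtain ⟨hlenK, hsumK⟩ := coe_facts K hKs
      have hLb : L = K.rotate ((b - d) % b) := (hback L hlenL d hd).symm
      have hLb' : L' = K.rotate ((b - d') % b) := by
        rw [heq]; exact (hback L' hlenL' d' hd').symm
      have he : (b - d) % b < b := Nat.mod_lt _ hb
      have he' : (b - d') % b < b := Nat.mod_lt _ hb
      obtain ⟨d0, hd0, huniq⟩ := cycle_lemma hb hab K hlenK hsumK
      have e1 := huniq ((b - d) % b) ⟨he, by rw [← hLb]; exact hLdy⟩
      have e2 := huniq ((b - d') % b) ⟨he', by rw [← hLb']; exact hLdy'⟩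
      have hee : (b - d) % b = (b - d') % b := by rw [e1, e2]
      have hdd : d = d' := by
        rw [hmod d hd, hmod d' hd'] at hee
        split_ifs at hee <;> omega
      have hLL : L = L' := by rw [hLb, hLb', hee]
      rw [hLL, hdd]
    rw [← himg, Finset.card_image_of_injOn hinj, Finset.card_product, Finset.card_range]
  -- the set of words equals image of D under decode
  have hW : {w : List Bool | IsDyckWord a b w ∧ ∀ i ≤ a, (runLengths w).count i = m i}
      = ↑(D.image decode) := by
    ext w
    simp only [Set.mem_setOf_eq, Finset.coe_image, Set.mem_image, Finset.mem_coe]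
    constructor
    · rintro ⟨hdy, hcnt⟩
      have hlenL : (runLengths w).length = b := by
        rw [runLengths, length_runLengthsAux, hdy.2.1]
      have hLs : (↑(runLengths w) : Multiset ℕ) = s := coe_of _ hlenL hcnt
      have hsumL : (runLengths w).sum = a := (coe_facts _ hLs).2
      have hdec : decode (runLengths w) = w := by
        obtain ⟨t, hdec1, hdec2⟩ := exists_decode w 0
        rw [runLengths] at hsumL ⊢
        have ht : t = 0 := by
          rw [hsumL, hdy.1] at hdec2; omega
        rw [ht] at hdec1
        simpa using hdec1
      have hdL : DyckL a b (runLengths w) :=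
        ((isDyck_decode (runLengths w)).mp (by rwa [hdec])).2.2
      exact ⟨runLengths w, (hDmem _).mpr ⟨hLs, hdL⟩, hdec⟩
    · rintro ⟨L, hLD, rfl⟩
      obtain ⟨hLs, hdL⟩ := (hDmem L).mp hLD
      obtain ⟨hlenL, hsumL⟩ := coe_facts L hLs
      refine ⟨(isDyck_decode L).mpr ⟨hsumL, hlenL, hdL⟩, ?_⟩
      intro i hi
      rw [runLengths_decode]
      have := congrArg (Multiset.count i) hLs
      rw [Multiset.coe_count] at this
      rw [this, hscount i hi]
  rw [hW, Set.ncard_coe_finset, Finset.card_image_of_injective _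
    (fun L L' h => by rw [← runLengths_decode L, h, runLengths_decode])]
  -- final arithmetic
  have hperm := perms_card s (Finset.range (a + 1)) hsub
  rw [hscard] at hperm
  have hprodeq : ∏ i ∈ Finset.range (a + 1), (Multiset.count i s).factorial
      = ∏ i ∈ Finset.range (a + 1), (m i).factorial := by
    refine Finset.prod_congr rfl fun i hi => ?_
    rw [hscount i (Nat.lt_succ_iff.mp (Finset.mem_range.mp hi))]
  rw [hcard2, hprodeq] at hperm
  have hbfact : b.factorial = b * (b - 1).factorial := by
    rcases b with _ | b'
    · omega
    · rw [Nat.factorial_succ]; rfl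
  rw [hbfact] at hperm
  apply Nat.eq_of_mul_eq_mul_left hb
  rw [← hperm]
  ring
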